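/- arXiv:1712.04769 — 3 statements merged into one kernel-verified Lean document; each statement's English description precedes it below -/
import Mathlib

section
/- Let Λ be a σ-finite measure on 𝒫 satisfying conditions (1.4) and (1.5), and let Λ̂ be the measure on 𝒫 with density ⟨x,e_θ⟩ with respect to Λ. If ∫_𝒫 ⟨x,e_θ⟩ · (log⟨x,e_θ⟩ − 1)⁺ Λ(dx) = ∞, then for every c > 0 and every s > 0 one has ∫_s^∞ Λ̂({x ∈ 𝒫 : ⟨x,e_θ⟩ > e^{ct}}) dt = ∞. -/
open MeasureTheory ENNReal Filter

noncomputable section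

/-- The space `𝒫` of nonincreasing sequences in `[-∞, ∞)` tending to `-∞`,
equipped (as a subtype of `ℕ → EReal`) with the σ-algebra generated by the coordinate maps. -/
def calP : Set (ℕ → EReal) :=
  {x | Antitone x ∧ (∀ n, x n ≠ ⊤) ∧ Tendsto x atTop (nhds ⊥)}

/-- `e^{θ y}`, with the convention that it is `0` when `y = -∞`, even for `θ = 0`. -/
def eexp (θ : ℝ) (y : EReal) : ℝ≥0∞ :=
  if y = ⊥ then 0 else ENNReal.ofReal (Real.exp (θ * y.toReal))

/-- `⟨x, e_θ⟩ = Σ_{n ≥ 1} e^{θ x_n}` (the sequence is indexed from `0` in Lean). -/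
def ip (θ : ℝ) (x : ℕ → EReal) : ℝ≥0∞ := ∑' n, eexp θ (x n)

/-- Condition (1.4): `∫ (1 ∧ x₁²) Λ(dx) < ∞`, with `1 ∧ x₁² = 1` when `x₁ = -∞`. -/
def cond14 (Λ : Measure calP) : Prop :=
  ∫⁻ x : calP, (if x.1 0 = ⊥ then 1
    else 1 ⊓ ENNReal.ofReal ((x.1 0).toReal ^ 2)) ∂Λ < ∞

/-- Condition (1.5): `∫ (1_{x₁>1} e^{θ x₁} + Σ_{k≥2} e^{θ x_k}) Λ(dx) < ∞`. -/
def cond15 (θ : ℝ) (Λ : Measure calP) : Prop :=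
  ∫⁻ x : calP, ((if (1 : EReal) < x.1 0 then eexp θ (x.1 0) else 0)
    + ∑' k, eexp θ (x.1 (k + 1))) ∂Λ < ∞

/-- `u ↦ (log u - 1)⁺` on `[0,∞]`, with value `∞` at `u = ∞`. -/
def logM1plus (w : ℝ≥0∞) : ℝ≥0∞ :=
  if w = ∞ then ∞ else ENNReal.ofReal (Real.log w.toReal - 1)

/- ======================= Auxiliary material ======================= -/

lemma measurable_eexp (θ : ℝ) : Measurable (eexp θ) := by
  unfold eexp
  exact Measurable.ite measurableSet_eq measurable_const
    (ENNReal.measurable_ofReal.comp (Real.measurable_exp.comp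
      (measurable_ereal_toReal.const_mul θ)))

lemma measurable_coord (n : ℕ) : Measurable fun x : calP => x.1 n :=
  (measurable_pi_apply n).comp measurable_subtype_coe

lemma measurable_ipP (θ : ℝ) : Measurable fun x : calP => ip θ x.1 := by
  unfold ip
  exact Measurable.ennreal_tsum fun n => (measurable_eexp θ).comp (measurable_coord n)

lemma measurable_logM1plus : Measurable logM1plus := by
  unfold logM1plus
  exact Measurable.ite measurableSet_eq measurable_const
    (ENNReal.measurable_ofReal.comp
      ((Real.measurable_log.comp ENNReal.measurable_toReal).sub measurable_const))

/-- The integrand of condition (1.5). -/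
def f15 (θ : ℝ) (x : calP) : ℝ≥0∞ :=
  (if (1 : EReal) < x.1 0 then eexp θ (x.1 0) else 0) + ∑' k, eexp θ (x.1 (k + 1))

lemma measurable_f15 (θ : ℝ) : Measurable (f15 θ) := by
  unfold f15
  apply Measurable.add
  · exact Measurable.ite (measurableSet_lt measurable_const (measurable_coord 0))
      ((measurable_eexp θ).comp (measurable_coord 0)) measurable_const
  · exact Measurable.ennreal_tsum fun k => (measurable_eexp θ).comp (measurable_coord (k + 1))

/-- The integrand of condition (1.4). -/
def g14 (x : calP) : ℝ≥0∞ :=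
  if x.1 0 = ⊥ then 1 else 1 ⊓ ENNReal.ofReal ((x.1 0).toReal ^ 2)

lemma measurable_g14 : Measurable g14 := by
  unfold g14
  exact Measurable.ite ((measurable_coord 0) measurableSet_eq) measurable_const
    (measurable_const.min (ENNReal.measurable_ofReal.comp
      ((measurable_ereal_toReal.comp (measurable_coord 0)).pow_const 2)))

lemma eexp_le_of_lt (θ : ℝ) (hθ : 0 ≤ θ) (y : EReal) (hy : y ≠ ⊤) (ε : ℝ)
    (h : y < (ε : EReal)) : eexp θ y ≤ ENNReal.ofReal (Real.exp (θ * ε)) := by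
  unfold eexp
  split
  · exact zero_le
  · rename_i hbot
    apply ENNReal.ofReal_le_ofReal
    apply Real.exp_le_exp.2
    apply mul_le_mul_of_nonneg_left _ hθ
    have := EReal.toReal_le_toReal h.le hbot (EReal.coe_ne_top ε)
    simpa using this

lemma log_le_of_le_exp {x r : ℝ} (hx : 0 ≤ x) (hr : 0 ≤ r) (h : x ≤ Real.exp r) :
    Real.log x ≤ r := by
  by_cases h1 : x ≤ 1
  · exact (Real.log_nonpos hx h1).trans hr
  · exact (Real.log_le_iff_le_exp (by linarith)).2 h

/-- Under (1.4) and (1.5), the set `{⟨x,e_θ⟩ > e}` has finite `Λ`-measure. -/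
lemma lambda_B1_lt_top (θ : ℝ) (hθ : 0 ≤ θ) (Λ : Measure calP)
    (h14 : cond14 Λ) (h15 : cond15 θ Λ) :
    Λ {x : calP | ENNReal.ofReal (Real.exp 1) < ip θ x.1} < ∞ := by
  have h15' : ∫⁻ x, f15 θ x ∂Λ < ∞ := h15
  have h14' : ∫⁻ x, g14 x ∂Λ < ∞ := h14
  set ε : ℝ := (θ + 1)⁻¹ with hε
  have hεpos : 0 < ε := by rw [hε]; positivity
  have hθε : θ * ε < 1 := by
    rw [hε, ← div_eq_mul_inv]
    exact (div_lt_one (by linarith)).2 (by linarith)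
  set δ : ℝ := Real.exp 1 - Real.exp (θ * ε) with hδ
  have hδpos : 0 < δ := sub_pos.2 (Real.exp_lt_exp.2 hθε)
  have hsub : {x : calP | ENNReal.ofReal (Real.exp 1) < ip θ x.1} ⊆
      {x : calP | ENNReal.ofReal δ ≤ f15 θ x} ∪
      {x : calP | 1 ⊓ ENNReal.ofReal (ε ^ 2) ≤ g14 x} := by
    intro x hx
    by_cases hcmp : x.1 0 < (ε : EReal)
    · left
      have h1 : eexp θ (x.1 0) ≤ ENNReal.ofReal (Real.exp (θ * ε)) :=
        eexp_le_of_lt θ hθ _ (x.2.2.1 0) ε hcmp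
      have h2 : ip θ x.1 = eexp θ (x.1 0) + ∑' k, eexp θ (x.1 (k + 1)) :=
        tsum_eq_zero_add' ENNReal.summable
      have h3 : ENNReal.ofReal (Real.exp 1)
          = ENNReal.ofReal δ + ENNReal.ofReal (Real.exp (θ * ε)) := by
        rw [← ENNReal.ofReal_add hδpos.le (Real.exp_pos _).le, hδ]
        ring_nf
      have hx' : ENNReal.ofReal δ + ENNReal.ofReal (Real.exp (θ * ε)) <
          (∑' k, eexp θ (x.1 (k + 1))) + ENNReal.ofReal (Real.exp (θ * ε)) := by
        calc ENNReal.ofReal δ + ENNReal.ofReal (Real.exp (θ * ε))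
            = ENNReal.ofReal (Real.exp 1) := h3.symm
          _ < ip θ x.1 := hx
          _ = eexp θ (x.1 0) + ∑' k, eexp θ (x.1 (k + 1)) := h2
          _ ≤ (∑' k, eexp θ (x.1 (k + 1))) + ENNReal.ofReal (Real.exp (θ * ε)) := by
              rw [add_comm]; exact add_le_add_right h1 _
      have htail : ENNReal.ofReal δ < ∑' k, eexp θ (x.1 (k + 1)) :=
        (ENNReal.add_lt_add_iff_right ENNReal.ofReal_ne_top).1 hx'
      exact le_trans htail.le le_add_self
    · right
      push_neg at hcmp
      have hnb : x.1 0 ≠ ⊥ := by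
        intro h; rw [h] at hcmp
        exact (EReal.coe_ne_bot ε) (le_bot_iff.1 hcmp)
      have htr : ε ≤ (x.1 0).toReal := by
        have := EReal.toReal_le_toReal hcmp (EReal.coe_ne_bot ε) (x.2.2.1 0)
        simpa using this
      show 1 ⊓ ENNReal.ofReal (ε ^ 2) ≤ g14 x
      unfold g14
      rw [if_neg hnb]
      exact inf_le_inf_left 1 (ENNReal.ofReal_le_ofReal (by nlinarith))
  have hM1 : Λ {x : calP | ENNReal.ofReal δ ≤ f15 θ x} < ∞ := by
    refine lt_of_le_of_lt (meas_ge_le_lintegral_div (measurable_f15 θ).aemeasurable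
      (ENNReal.ofReal_pos.2 hδpos).ne' ENNReal.ofReal_ne_top) ?_
    exact ENNReal.div_lt_top h15'.ne (ENNReal.ofReal_pos.2 hδpos).ne'
  have hM2 : Λ {x : calP | 1 ⊓ ENNReal.ofReal (ε ^ 2) ≤ g14 x} < ∞ := by
    have hne0 : (1 : ℝ≥0∞) ⊓ ENNReal.ofReal (ε ^ 2) ≠ 0 := by
      refine (lt_inf_iff.2 ⟨zero_lt_one, ENNReal.ofReal_pos.2 (by positivity)⟩).ne'
    have hnetop : (1 : ℝ≥0∞) ⊓ ENNReal.ofReal (ε ^ 2) ≠ ∞ :=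
      (inf_le_left.trans_lt one_lt_top).ne
    refine lt_of_le_of_lt (meas_ge_le_lintegral_div measurable_g14.aemeasurable
      hne0 hnetop) ?_
    exact ENNReal.div_lt_top h14'.ne hne0
  calc Λ {x : calP | ENNReal.ofReal (Real.exp 1) < ip θ x.1}
      ≤ Λ ({x : calP | ENNReal.ofReal δ ≤ f15 θ x} ∪
          {x : calP | 1 ⊓ ENNReal.ofReal (ε ^ 2) ≤ g14 x}) := measure_mono hsub
    _ ≤ Λ {x : calP | ENNReal.ofReal δ ≤ f15 θ x}
        + Λ {x : calP | 1 ⊓ ENNReal.ofReal (ε ^ 2) ≤ g14 x} := measure_union_le _ _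
    _ < ∞ := ENNReal.add_lt_top.2 ⟨hM1, hM2⟩

/-- if `∫ ⟨x,e_θ⟩ (log⟨x,e_θ⟩ - 1)⁺ Λ(dx) = ∞`, then for every `c > 0` and
`s > 0`, `∫_s^∞ Λ̂(⟨x,e_θ⟩ > e^{ct}) dt = ∞`, where `Λ̂(dx) = ⟨x,e_θ⟩ Λ(dx)`. -/
theorem stmt1 (θ : ℝ) (hθ : 0 ≤ θ) (Λ : Measure calP) [SigmaFinite Λ]
    (h14 : cond14 Λ) (h15 : cond15 θ Λ)
    (hLlogL : ∫⁻ x : calP, ip θ x.1 * logM1plus (ip θ x.1) ∂Λ = ∞) :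
    ∀ c : ℝ, 0 < c → ∀ s : ℝ, 0 < s →
      ∫⁻ t in Set.Ioi s,
        (Λ.withDensity fun x : calP => ip θ x.1)
          {x : calP | ENNReal.ofReal (Real.exp (c * t)) < ip θ x.1} = ∞ := by
  intro c hc s hs
  set a : ℝ := c * s + 1 with ha
  have ha1 : 1 < a := by nlinarith
  set K : ℝ≥0∞ := ENNReal.ofReal (c * a) with hK
  have hKne0 : K ≠ 0 := (ENNReal.ofReal_pos.2 (by nlinarith)).ne'
  have hKtop : K ≠ ∞ := ENNReal.ofReal_ne_top
  set Ba : Set calP := {x | ENNReal.ofReal (Real.exp a) < ip θ x.1} with hBa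
  have hBameas : MeasurableSet Ba :=
    measurableSet_lt measurable_const (measurable_ipP θ)
  -- Step 1: the integral of `ip · logM1plus(ip)` over `Ba` is infinite.
  have hB1 := lambda_B1_lt_top θ hθ Λ h14 h15
  have hcompl : ∫⁻ x in Baᶜ, ip θ x.1 * logM1plus (ip θ x.1) ∂Λ < ∞ := by
    have hbound : ∀ x, x ∈ Baᶜ → ip θ x.1 * logM1plus (ip θ x.1) ≤
        Set.indicator {y : calP | ENNReal.ofReal (Real.exp 1) < ip θ y.1}
          (fun _ => ENNReal.ofReal (Real.exp a) * ENNReal.ofReal (a - 1)) x := by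
      intro x hxc
      have hip_le : ip θ x.1 ≤ ENNReal.ofReal (Real.exp a) := not_lt.1 hxc
      have hne : ip θ x.1 ≠ ∞ := (hip_le.trans_lt ENNReal.ofReal_lt_top).ne
      by_cases hx1 : ENNReal.ofReal (Real.exp 1) < ip θ x.1
      · rw [Set.indicator_of_mem
          (show x ∈ {y : calP | ENNReal.ofReal (Real.exp 1) < ip θ y.1} from hx1)]
        have hlog : logM1plus (ip θ x.1) ≤ ENNReal.ofReal (a - 1) := by
          unfold logM1plus
          rw [if_neg hne]
          apply ENNReal.ofReal_le_ofReal
          have h1 : (ip θ x.1).toReal ≤ Real.exp a :=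
            ENNReal.toReal_le_of_le_ofReal (Real.exp_pos a).le hip_le
          have h2 : Real.log (ip θ x.1).toReal ≤ a :=
            log_le_of_le_exp ENNReal.toReal_nonneg (by linarith) h1
          linarith
        exact mul_le_mul' hip_le hlog
      · rw [Set.indicator_of_notMem
          (show x ∉ {y : calP | ENNReal.ofReal (Real.exp 1) < ip θ y.1} from hx1)]
        have hip_le1 : ip θ x.1 ≤ ENNReal.ofReal (Real.exp 1) := not_lt.1 hx1
        have hlog0 : logM1plus (ip θ x.1) = 0 := by
          unfold logM1plus
          rw [if_neg hne]
          rw [ENNReal.ofReal_eq_zero]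
          have h1 : (ip θ x.1).toReal ≤ Real.exp 1 :=
            ENNReal.toReal_le_of_le_ofReal (Real.exp_pos 1).le hip_le1
          have h2 : Real.log (ip θ x.1).toReal ≤ 1 :=
            log_le_of_le_exp ENNReal.toReal_nonneg zero_le_one h1
          linarith
        rw [hlog0, mul_zero]
    calc ∫⁻ x in Baᶜ, ip θ x.1 * logM1plus (ip θ x.1) ∂Λ
        ≤ ∫⁻ x in Baᶜ, Set.indicator {y : calP | ENNReal.ofReal (Real.exp 1) < ip θ y.1}
            (fun _ => ENNReal.ofReal (Real.exp a) * ENNReal.ofReal (a - 1)) x ∂Λ := by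
          refine setLIntegral_mono ?_ hbound
          exact measurable_const.indicator
            (measurableSet_lt measurable_const (measurable_ipP θ))
      _ ≤ ∫⁻ x, Set.indicator {y : calP | ENNReal.ofReal (Real.exp 1) < ip θ y.1}
            (fun _ => ENNReal.ofReal (Real.exp a) * ENNReal.ofReal (a - 1)) x ∂Λ :=
          setLIntegral_le_lintegral _ _
      _ = (ENNReal.ofReal (Real.exp a) * ENNReal.ofReal (a - 1)) *
            Λ {y : calP | ENNReal.ofReal (Real.exp 1) < ip θ y.1} := by
          rw [lintegral_indicator (measurableSet_lt measurable_const (measurable_ipP θ)),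
            setLIntegral_const]
      _ < ∞ := ENNReal.mul_lt_top
          (ENNReal.mul_lt_top ENNReal.ofReal_lt_top ENNReal.ofReal_lt_top) hB1
  have hBa_int : ∫⁻ x in Ba, ip θ x.1 * logM1plus (ip θ x.1) ∂Λ = ∞ := by
    rw [← lintegral_add_compl (fun x : calP => ip θ x.1 * logM1plus (ip θ x.1)) hBameas]
      at hLlogL
    rcases ENNReal.add_eq_top.1 hLlogL with h | h
    · exact h
    · exact absurd h hcompl.ne
  -- Step 2: Fubini set-up.
  set U : Set (ℝ × calP) := {p | ENNReal.ofReal (Real.exp (c * p.1)) < ip θ p.2.1} with hU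
  have hUmeas : MeasurableSet U :=
    measurableSet_lt
      (ENNReal.measurable_ofReal.comp (Real.measurable_exp.comp (measurable_fst.const_mul c)))
      ((measurable_ipP θ).comp measurable_snd)
  have hFmeas : Measurable fun p : ℝ × calP => U.indicator (fun q => ip θ q.2.1) p :=
    ((measurable_ipP θ).comp measurable_snd).indicator hUmeas
  have h1 : ∀ t : ℝ, (Λ.withDensity fun x : calP => ip θ x.1)
      {x : calP | ENNReal.ofReal (Real.exp (c * t)) < ip θ x.1}
      = ∫⁻ x, U.indicator (fun q => ip θ q.2.1) (t, x) ∂Λ := by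
    intro t
    rw [withDensity_apply _ (measurableSet_lt measurable_const (measurable_ipP θ)),
      ← lintegral_indicator (measurableSet_lt measurable_const (measurable_ipP θ))]
    apply lintegral_congr
    intro x
    simp only [Set.indicator_apply, Set.mem_setOf_eq, hU]
  rw [lintegral_congr h1]
  have hswap : ∫⁻ t in Set.Ioi s, ∫⁻ x, U.indicator (fun q => ip θ q.2.1) (t, x) ∂Λ ∂volume
      = ∫⁻ x, ∫⁻ t in Set.Ioi s, U.indicator (fun q => ip θ q.2.1) (t, x) ∂volume ∂Λ :=
    lintegral_lintegral_swap hFmeas.aemeasurable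
  rw [hswap]
  -- Step 3: pointwise lower bound on `Ba` and conclusion.
  refine eq_top_iff.2 ?_
  have key : ∀ x : calP,
      Ba.indicator (fun y => K⁻¹ * (ip θ y.1 * logM1plus (ip θ y.1))) x
      ≤ ∫⁻ t in Set.Ioi s, U.indicator (fun q => ip θ q.2.1) (t, x) ∂volume := by
    intro x
    by_cases hxB : x ∈ Ba
    · rw [Set.indicator_of_mem hxB]
      have hwa : ENNReal.ofReal (Real.exp a) < ip θ x.1 := hxB
      by_cases hwtop : ip θ x.1 = ∞
      · have hall : ∀ t : ℝ, U.indicator (fun q : ℝ × calP => ip θ q.2.1) (t, x) = ∞ := by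
          intro t
          rw [Set.indicator_of_mem]
          · exact hwtop
          · show ENNReal.ofReal (Real.exp (c * t)) < ip θ x.1
            rw [hwtop]; exact ENNReal.ofReal_lt_top
        have hinner : ∫⁻ t in Set.Ioi s, U.indicator (fun q => ip θ q.2.1) (t, x) ∂volume
            = ∞ := by
          rw [setLIntegral_congr_fun measurableSet_Ioi
            (fun t _ => hall t), setLIntegral_const,
            Real.volume_Ioi]
          simp
        rw [hinner]; exact le_top
      · have hwne0 : ip θ x.1 ≠ 0 := by
          intro h; rw [h] at hwa; simp at hwa
        have htRpos : 0 < (ip θ x.1).toReal := ENNReal.toReal_pos hwne0 hwtop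
        set L : ℝ := Real.log (ip θ x.1).toReal with hL
        have hLa : a < L := by
          have hlt : Real.exp a < (ip θ x.1).toReal :=
            (ENNReal.ofReal_lt_iff_lt_toReal (Real.exp_pos a).le hwtop).1 hwa
          exact (Real.lt_log_iff_exp_lt htRpos).2 hlt
        have hmem : ∀ t ∈ Set.Ioo s (L / c),
            U.indicator (fun q : ℝ × calP => ip θ q.2.1) (t, x) = ip θ x.1 := by
          intro t ht
          rw [Set.indicator_of_mem]
          show ENNReal.ofReal (Real.exp (c * t)) < ip θ x.1
          rw [ENNReal.ofReal_lt_iff_lt_toReal (Real.exp_pos _).le hwtop]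
          have h1 : t * c < L := (lt_div_iff₀ hc).1 ht.2
          calc Real.exp (c * t) < Real.exp L := Real.exp_lt_exp.2 (by linarith)
            _ = (ip θ x.1).toReal := Real.exp_log htRpos
        have hlogval : logM1plus (ip θ x.1) = ENNReal.ofReal (L - 1) := by
          unfold logM1plus; rw [if_neg hwtop]
        have hreal : L - 1 ≤ c * a * (L / c - s) := by
          have hexp : c * a * (L / c - s) = a * (L - c * s) := by
            field_simp
          rw [hexp, ha]
          nlinarith
        have hkey : K⁻¹ * (ip θ x.1 * logM1plus (ip θ x.1))
            ≤ ip θ x.1 * ENNReal.ofReal (L / c - s) := by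
          rw [hlogval]
          have hLcs : 0 ≤ L / c - s := by
            have := hLa
            have h2 : s < L / c := by rw [lt_div_iff₀ hc]; nlinarith
            linarith
          have h3 : ENNReal.ofReal (L - 1) ≤ K * ENNReal.ofReal (L / c - s) := by
            rw [hK, ← ENNReal.ofReal_mul (by nlinarith)]
            exact ENNReal.ofReal_le_ofReal hreal
          calc K⁻¹ * (ip θ x.1 * ENNReal.ofReal (L - 1))
              ≤ K⁻¹ * (ip θ x.1 * (K * ENNReal.ofReal (L / c - s))) := by
                exact mul_le_mul_right (mul_le_mul_right h3 _) _
            _ = (K⁻¹ * K) * (ip θ x.1 * ENNReal.ofReal (L / c - s)) := by ring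
            _ = ip θ x.1 * ENNReal.ofReal (L / c - s) := by
                rw [ENNReal.inv_mul_cancel hKne0 hKtop, one_mul]
        calc K⁻¹ * (ip θ x.1 * logM1plus (ip θ x.1))
            ≤ ip θ x.1 * ENNReal.ofReal (L / c - s) := hkey
          _ = ∫⁻ _ in Set.Ioo s (L / c), ip θ x.1 ∂volume := by
              rw [setLIntegral_const, Real.volume_Ioo]
          _ = ∫⁻ t in Set.Ioo s (L / c),
                U.indicator (fun q => ip θ q.2.1) (t, x) ∂volume :=
              (setLIntegral_congr_fun measurableSet_Ioo
                (fun t ht => (hmem t ht).symm))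
          _ ≤ ∫⁻ t in Set.Ioi s, U.indicator (fun q => ip θ q.2.1) (t, x) ∂volume :=
              lintegral_mono_set fun t ht => ht.1
    · rw [Set.indicator_of_notMem hxB]
      exact zero_le
  calc (⊤ : ℝ≥0∞) = K⁻¹ * ∫⁻ x in Ba, ip θ x.1 * logM1plus (ip θ x.1) ∂Λ := by
        rw [hBa_int, ENNReal.mul_top (ENNReal.inv_ne_zero.2 hKtop)]
    _ = ∫⁻ x in Ba, K⁻¹ * (ip θ x.1 * logM1plus (ip θ x.1)) ∂Λ := by
        rw [lintegral_const_mul _ (show Measurable fun x : calP =>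
          ip θ x.1 * logM1plus (ip θ x.1) from (measurable_ipP θ).mul
          (measurable_logM1plus.comp (measurable_ipP θ)))]
    _ = ∫⁻ x, Ba.indicator (fun y => K⁻¹ * (ip θ y.1 * logM1plus (ip θ y.1))) x ∂Λ :=
        (lintegral_indicator hBameas _).symm
    _ ≤ ∫⁻ x, ∫⁻ t in Set.Ioi s, U.indicator (fun q => ip θ q.2.1) (t, x) ∂volume ∂Λ :=
        lintegral_mono key
end
end

section
/- Let Λ be a σ-finite measure on 𝒫 satisfying conditions (1.4) and (1.5). Then for every δ > 0, Λ({x ∈ 𝒫 : ⟨x,e_θ⟩ ∉ [1−δ, 1+δ]}) < ∞. -/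
open MeasureTheory ENNReal Filter

noncomputable section

lemma markov_fin {Λ : Measure calP} {S : Set calP} (hS : MeasurableSet S)
    {c : ℝ≥0∞} (hc0 : c ≠ 0) {f : calP → ℝ≥0∞}
    (hcf : ∀ x ∈ S, c ≤ f x) (hf : ∫⁻ x, f x ∂Λ < ∞) : Λ S < ∞ := by
  have h1 : c * Λ S ≤ ∫⁻ x, f x ∂Λ := by
    rw [← lintegral_indicator_const hS]
    refine lintegral_mono fun x => ?_
    by_cases hx : x ∈ S
    · simpa [Set.indicator_of_mem hx] using hcf x hx
    · simp [Set.indicator_of_notMem hx]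
  by_contra h
  rw [not_lt, top_le_iff] at h
  rw [h, ENNReal.mul_top hc0] at h1
  exact absurd (lt_of_le_of_lt h1 hf) (lt_irrefl ⊤)

/-- for every `δ > 0`, `Λ({x : ⟨x,e_θ⟩ ∉ [1-δ, 1+δ]}) < ∞`. -/
theorem stmt2 (θ : ℝ) (hθ : 0 ≤ θ) (Λ : Measure calP) [SigmaFinite Λ]
    (h14 : cond14 Λ) (h15 : cond15 θ Λ) :
    ∀ δ : ℝ, 0 < δ →
      Λ {x : calP | ip θ x.1 ∉ Set.Icc (ENNReal.ofReal (1 - δ)) (ENNReal.ofReal (1 + δ))}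
        < ∞ := by
  intro δ hδ
  set L := Real.log (1 + δ / 2) with hLdef
  have hL0 : 0 < L := Real.log_pos (by linarith)
  set η := L / (θ + 1) with hηdef
  have hη0 : 0 < η := div_pos hL0 (by linarith)
  have hθη : θ * η ≤ L := by
    have h1 : θ / (θ + 1) ≤ 1 := by rw [div_le_one (by linarith)]; linarith
    have h2 : θ * η = θ / (θ + 1) * L := by rw [hηdef]; ring
    rw [h2]
    calc θ / (θ + 1) * L ≤ 1 * L := by
          exact mul_le_mul_of_nonneg_right h1 hL0.le
      _ = L := one_mul L
  have hexpU : Real.exp (θ * η) ≤ 1 + δ / 2 := by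
    have := Real.exp_le_exp.mpr hθη
    rwa [hLdef, Real.exp_log (by linarith)] at this
  set A : Set calP := {x : calP | x.1 0 = ⊥ ∨ η ^ 2 ≤ (x.1 0).toReal ^ 2} with hAdef
  set B : Set calP := {x : calP | ENNReal.ofReal (δ / 2) ≤ ∑' k, eexp θ (x.1 (k + 1))}
    with hBdef
  have mcoord : ∀ n, Measurable fun x : calP => x.1 n :=
    fun n => (measurable_pi_apply n).comp measurable_subtype_coe
  have hA : MeasurableSet A := by
    have e : A = ((fun x : calP => x.1 0) ⁻¹' {⊥}) ∪
        ((fun x : calP => (x.1 0).toReal ^ 2) ⁻¹' Set.Ici (η ^ 2)) := rfl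
    rw [e]
    exact ((mcoord 0) (measurableSet_singleton _)).union
      ((((measurable_ereal_toReal.comp (mcoord 0)).pow_const 2)) measurableSet_Ici)
  have htail : Measurable fun x : calP => ∑' k, eexp θ (x.1 (k + 1)) :=
    Measurable.ennreal_tsum fun k => (measurable_eexp θ).comp (mcoord (k + 1))
  have hB : MeasurableSet B := measurableSet_le measurable_const htail
  have hsub : {x : calP | ip θ x.1 ∉
      Set.Icc (ENNReal.ofReal (1 - δ)) (ENNReal.ofReal (1 + δ))} ⊆ A ∪ B := by
    intro x hx
    by_contra hx'
    rw [Set.mem_union] at hx'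
    push_neg at hx'
    obtain ⟨hxA, hxB⟩ := hx'
    rw [hAdef, Set.mem_setOf_eq] at hxA
    push_neg at hxA
    rw [hBdef, Set.mem_setOf_eq, not_le] at hxB
    set t := (x.1 0).toReal with htdef
    have ht : -η ≤ t ∧ t ≤ η := by
      constructor <;> nlinarith [hxA.2, hη0]
    have hsplit : ip θ x.1 = eexp θ (x.1 0) + ∑' k, eexp θ (x.1 (k + 1)) :=
      tsum_eq_zero_add' ENNReal.summable
    have heexp : eexp θ (x.1 0) = ENNReal.ofReal (Real.exp (θ * t)) := by
      simp [eexp, hxA.1, htdef]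
    refine hx (Set.mem_Icc.mpr ⟨?_, ?_⟩)
    · rw [hsplit, heexp]
      have h2 : Real.exp (-(θ * η)) ≤ Real.exp (θ * t) :=
        Real.exp_le_exp.mpr (by nlinarith [mul_le_mul_of_nonneg_left ht.1 hθ])
      have h3 : Real.exp (-(θ * η)) * Real.exp (θ * η) = 1 := by
        rw [← Real.exp_add]; simp
      have hpos : (0 : ℝ) < 1 + δ / 2 := by linarith
      have h1 : (1 : ℝ) - δ ≤ Real.exp (θ * t) := by
        nlinarith [mul_le_mul_of_nonneg_left hexpU (le_of_lt (Real.exp_pos (-(θ * η)))),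
          h2, h3, hpos, sq_nonneg δ, hδ]
      exact le_trans (ENNReal.ofReal_le_ofReal h1) le_self_add
    · rw [hsplit, heexp]
      have hU : Real.exp (θ * t) ≤ 1 + δ / 2 :=
        le_trans (Real.exp_le_exp.mpr (by nlinarith [mul_le_mul_of_nonneg_left ht.2 hθ])) hexpU
      calc ENNReal.ofReal (Real.exp (θ * t)) + ∑' k, eexp θ (x.1 (k + 1))
          ≤ ENNReal.ofReal (1 + δ / 2) + ENNReal.ofReal (δ / 2) :=
            add_le_add (ENNReal.ofReal_le_ofReal hU) hxB.le
        _ = ENNReal.ofReal (1 + δ) := by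
            rw [← ENNReal.ofReal_add (by linarith) (by linarith)]; ring_nf
  have hAfin : Λ A < ∞ := by
    refine markov_fin hA (c := 1 ⊓ ENNReal.ofReal (η ^ 2)) ?_ ?_ h14
    · exact (lt_min one_pos (ENNReal.ofReal_pos.mpr (by positivity))).ne'
    · intro x hxA
      rw [hAdef, Set.mem_setOf_eq] at hxA
      by_cases h0 : x.1 0 = ⊥
      · simp only [h0, if_true]
        exact inf_le_left
      · rcases hxA with h | h
        · exact absurd h h0
        · simp only [h0, if_false]
          exact le_inf inf_le_left (inf_le_right.trans (ENNReal.ofReal_le_ofReal h))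
  have hBfin : Λ B < ∞ := by
    refine markov_fin hB (c := ENNReal.ofReal (δ / 2)) ?_ ?_ h15
    · exact (ENNReal.ofReal_pos.mpr (by linarith)).ne'
    · intro x hxB
      rw [hBdef, Set.mem_setOf_eq] at hxB
      exact le_trans hxB (self_le_add_left _ _)
  exact lt_of_le_of_lt (measure_mono hsub)
    (lt_of_le_of_lt (measure_union_le A B) (ENNReal.add_lt_top.mpr ⟨hAfin, hBfin⟩))
end
end

section
/- Let Λ be a σ-finite measure on 𝒫 satisfying condition (1.5), and let 0 < c' < c. Then ∫_0^∞ e^{−cs} ( ∫_𝒫 1_{⟨x,e_θ⟩ ≤ e^{c's}+1} · Σ_{j≥1} e^{θ x_j} · ( Σ_{k≥1, k≠j} e^{θ x_k} ) Λ(dx) ) ds < ∞. -/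
open MeasureTheory ENNReal Filter

noncomputable section

/-- Key combinatorial bound: `Σ_j a_j (Σ_{k≠j} a_k) ≤ 2 S T` where `S = Σ a_n` and
`T = Σ_{k≥1} a_k`. -/
lemma aux_tsum_bound (a : ℕ → ℝ≥0∞) :
    ∑' j, a j * ∑' k, (if k = j then 0 else a k) ≤
      2 * (∑' n, a n) * (∑' k, a (k + 1)) := by
  have hle : ∀ j, (∑' k, (if k = j then 0 else a k)) ≤ ∑' n, a n := fun j =>
    ENNReal.tsum_le_tsum fun k => by split <;> simp
  have h0 : (∑' k, (if k = 0 then 0 else a k)) = ∑' k, a (k + 1) := by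
    rw [tsum_eq_zero_add' ENNReal.summable]
    simp
  have hsplit : ∑' j, a j * ∑' k, (if k = j then 0 else a k)
      = a 0 * (∑' k, (if k = 0 then 0 else a k))
        + ∑' j, a (j + 1) * ∑' k, (if k = (j + 1) then 0 else a k) :=
    tsum_eq_zero_add' ENNReal.summable
  rw [hsplit, h0]
  have h1 : a 0 * (∑' k, a (k + 1)) ≤ (∑' n, a n) * ∑' k, a (k + 1) :=
    mul_le_mul_left (ENNReal.le_tsum 0) _
  have h2 : (∑' j, a (j + 1) * ∑' k, (if k = (j + 1) then 0 else a k))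
      ≤ ∑' j, a (j + 1) * ∑' n, a n :=
    ENNReal.tsum_le_tsum fun j => mul_le_mul_right (hle _) _
  refine le_trans (add_le_add h1 h2) ?_
  rw [ENNReal.tsum_mul_right]
  exact le_of_eq (by ring)

/-- for `0 < c' < c`,
`∫_0^∞ e^{-cs} (∫ 1_{⟨x,e_θ⟩ ≤ e^{c's}+1} Σ_{j≥1} e^{θ x_j} (Σ_{k≠j} e^{θ x_k}) Λ(dx)) ds
  < ∞`. -/
theorem stmt14 (θ : ℝ) (hθ : 0 ≤ θ) (Λ : Measure calP) [SigmaFinite Λ]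
    (h15 : cond15 θ Λ) (c c' : ℝ) (hc' : 0 < c') (hcc : c' < c) :
    ∫⁻ s in Set.Ioi (0 : ℝ),
      ENNReal.ofReal (Real.exp (-c * s)) *
        ∫⁻ x : calP,
          (if ip θ x.1 ≤ ENNReal.ofReal (Real.exp (c' * s)) + 1 then
            ∑' j, eexp θ (x.1 j) * ∑' k, (if k = j then 0 else eexp θ (x.1 k))
          else 0) ∂Λ < ∞ := by
  set C : ℝ≥0∞ := ∫⁻ x : calP, ∑' k, eexp θ (x.1 (k + 1)) ∂Λ with hC
  have hCfin : C < ∞ := by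
    refine lt_of_le_of_lt (lintegral_mono fun x => ?_) h15
    exact le_add_self
  -- pointwise bound on the inner integral
  have hinner : ∀ s : ℝ,
      (∫⁻ x : calP,
        (if ip θ x.1 ≤ ENNReal.ofReal (Real.exp (c' * s)) + 1 then
          ∑' j, eexp θ (x.1 j) * ∑' k, (if k = j then 0 else eexp θ (x.1 k))
        else 0) ∂Λ) ≤ (ENNReal.ofReal (Real.exp (c' * s)) + 1) * 2 * C := by
    intro s
    set B := ENNReal.ofReal (Real.exp (c' * s)) + 1 with hB
    have hBne : B * 2 ≠ ∞ :=
      ENNReal.mul_ne_top (ENNReal.add_ne_top.2 ⟨ENNReal.ofReal_ne_top, ENNReal.one_ne_top⟩)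
        (by simp)
    calc ∫⁻ x : calP,
          (if ip θ x.1 ≤ B then
            ∑' j, eexp θ (x.1 j) * ∑' k, (if k = j then 0 else eexp θ (x.1 k))
          else 0) ∂Λ
        ≤ ∫⁻ x : calP, B * 2 * (∑' k, eexp θ (x.1 (k + 1))) ∂Λ := by
          refine lintegral_mono fun x => ?_
          split
          · rename_i hx
            refine le_trans (aux_tsum_bound fun n => eexp θ (x.1 n)) ?_
            calc 2 * (∑' n, eexp θ (x.1 n)) * (∑' k, eexp θ (x.1 (k + 1)))
                ≤ 2 * B * (∑' k, eexp θ (x.1 (k + 1))) := by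
                  gcongr
                  exact hx
              _ = B * 2 * (∑' k, eexp θ (x.1 (k + 1))) := by ring
          · exact zero_le
      _ = B * 2 * C := lintegral_const_mul' _ _ hBne
  have h2C : (2 : ℝ≥0∞) * C ≠ ∞ := ENNReal.mul_ne_top (by simp) hCfin.ne
  have key : ∀ s : ℝ,
      ENNReal.ofReal (Real.exp (-c * s)) * ((ENNReal.ofReal (Real.exp (c' * s)) + 1) * 2 * C)
      = (ENNReal.ofReal (Real.exp (-(c - c') * s)) + ENNReal.ofReal (Real.exp (-c * s)))
          * (2 * C) := by
    intro s
    have h1 : ENNReal.ofReal (Real.exp (-c * s)) * (ENNReal.ofReal (Real.exp (c' * s)) + 1)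
        = ENNReal.ofReal (Real.exp (-(c - c') * s)) + ENNReal.ofReal (Real.exp (-c * s)) := by
      rw [mul_add, mul_one, ← ENNReal.ofReal_mul (Real.exp_nonneg _), ← Real.exp_add]
      congr 2
      ring
    calc ENNReal.ofReal (Real.exp (-c * s)) * ((ENNReal.ofReal (Real.exp (c' * s)) + 1) * 2 * C)
        = (ENNReal.ofReal (Real.exp (-c * s)) * (ENNReal.ofReal (Real.exp (c' * s)) + 1))
            * (2 * C) := by ring
      _ = _ := by rw [h1]
  calc ∫⁻ s in Set.Ioi (0 : ℝ),
        ENNReal.ofReal (Real.exp (-c * s)) *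
          ∫⁻ x : calP,
            (if ip θ x.1 ≤ ENNReal.ofReal (Real.exp (c' * s)) + 1 then
              ∑' j, eexp θ (x.1 j) * ∑' k, (if k = j then 0 else eexp θ (x.1 k))
            else 0) ∂Λ
      ≤ ∫⁻ s in Set.Ioi (0 : ℝ),
          (ENNReal.ofReal (Real.exp (-(c - c') * s))
            + ENNReal.ofReal (Real.exp (-c * s))) * (2 * C) := by
        refine lintegral_mono fun s => ?_
        exact le_trans (mul_le_mul_right (hinner s) _) (le_of_eq (key s))
    _ = (∫⁻ s in Set.Ioi (0 : ℝ),
          (ENNReal.ofReal (Real.exp (-(c - c') * s))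
            + ENNReal.ofReal (Real.exp (-c * s)))) * (2 * C) :=
        lintegral_mul_const' _ _ h2C
    _ < ∞ := by
        refine ENNReal.mul_lt_top ?_ (lt_of_le_of_ne le_top h2C)
        rw [lintegral_add_left (by fun_prop)]
        exact ENNReal.add_lt_top.2
          ⟨(exp_neg_integrableOn_Ioi 0 (by linarith : (0:ℝ) < c - c')).lintegral_lt_top,
           (exp_neg_integrableOn_Ioi 0 (by linarith : (0:ℝ) < c)).lintegral_lt_top⟩
end
end
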